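/- Theorem 2: Suppose the DC-OPF problem admits a strictly feasible point (one satisfying the power-balance equations and slack-bus condition, with all generation limits and all line-flow limits holding with strict inequality), and suppose (λ*, θ*, μ*, P*_G) is a fixed point of the distributed DC-OPF algorithm. Then the primal variables (P*_G, θ* − θ*_1·𝟙), i.e. the fixed-point generator outputs together with the fixed-point angles shifted so that the slack-bus angle is zero, constitute an optimal solution of the DC-OPF problem: they are feasible, and the total generation cost Σ_{n∈Ω_G} (a_n (P*_{G_n})² + b_n P*_{G_n} + c_n) is less than or equal to the total generation cost of every feasible point. -/

import Mathlib

open Finset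

/-- Feasibility for the DC-OPF problem: power balance at every bus, the
slack-bus condition `θ₁ = 0`, the generation limits, and the line-flow
limits. Buses are indexed by `Fin (N+1)` with slack bus `0`. -/
def DCOPF.Feasible (N : ℕ)
    (Ω : Fin (N + 1) → Finset (Fin (N + 1)))
    (X Pbar : Fin (N + 1) → Fin (N + 1) → ℝ)
    (PL : Fin (N + 1) → ℝ)
    (G : Fin (N + 1) → Finset ℕ) (Plow Pup : ℕ → ℝ)
    (PG : ℕ → ℝ) (θ : Fin (N + 1) → ℝ) : Prop :=
  (∀ i, (∑ n ∈ G i, PG n) - PL i = ∑ j ∈ Ω i, (θ i - θ j) / X i j) ∧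
  θ 0 = 0 ∧
  (∀ i, ∀ n ∈ G i, Plow n ≤ PG n ∧ PG n ≤ Pup n) ∧
  (∀ i, ∀ j ∈ Ω i, -(Pbar i j) ≤ (θ i - θ j) / X i j ∧
      (θ i - θ j) / X i j ≤ Pbar i j)

/-- Strict feasibility: feasibility with all generation limits and all
line-flow limits holding with strict inequality. -/
def DCOPF.StrictFeasible (N : ℕ)
    (Ω : Fin (N + 1) → Finset (Fin (N + 1)))
    (X Pbar : Fin (N + 1) → Fin (N + 1) → ℝ)
    (PL : Fin (N + 1) → ℝ)
    (G : Fin (N + 1) → Finset ℕ) (Plow Pup : ℕ → ℝ)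
    (PG : ℕ → ℝ) (θ : Fin (N + 1) → ℝ) : Prop :=
  (∀ i, (∑ n ∈ G i, PG n) - PL i = ∑ j ∈ Ω i, (θ i - θ j) / X i j) ∧
  θ 0 = 0 ∧
  (∀ i, ∀ n ∈ G i, Plow n < PG n ∧ PG n < Pup n) ∧
  (∀ i, ∀ j ∈ Ω i, -(Pbar i j) < (θ i - θ j) / X i j ∧
      (θ i - θ j) / X i j < Pbar i j)

/-- Total generation cost: the sum over all buses of the quadratic costs of
the generators located at that bus. -/
def DCOPF.cost (N : ℕ) (G : Fin (N + 1) → Finset ℕ) (a b c : ℕ → ℝ)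
    (PG : ℕ → ℝ) : ℝ :=
  ∑ i, ∑ n ∈ G i, (a n * PG n ^ 2 + b n * PG n + c n)

/-- Variational inequality / optimality of the clamped unconstrained minimizer of a
box-constrained quadratic: the projection `p = clamp((L-B)/(2A))` minimizes
`A x² + B x - L x` over `[lo, hi]`. -/
lemma clamp_quadratic_opt (A B L lo hi x p : ℝ) (hA : 0 < A)
    (hp : p = max lo (min hi ((L - B) / (2 * A))))
    (hlo : lo ≤ x) (hhi : x ≤ hi) :
    A * p ^ 2 + B * p - L * p ≤ A * x ^ 2 + B * x - L * x := by
  set m := (L - B) / (2 * A) with hm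
  have h2A : (2 * A) ≠ 0 := by positivity
  have hmval : 2 * A * m = L - B := by
    rw [hm]; field_simp
  have hlohi : lo ≤ hi := hlo.trans hhi
  have hVI : 0 ≤ (x - p) * (2 * A * (p - m)) := by
    rcases le_total m lo with h1 | h1
    · have hpe : p = lo := by
        rcases le_total m hi with h2 | h2
        · rw [hp, min_eq_right h2, max_eq_left h1]
        · have : lo = hi := le_antisymm hlohi (h2.trans h1)
          rw [hp, min_eq_left h2, max_eq_right hlohi, this]
      have hx : 0 ≤ x - p := by rw [hpe]; linarith
      have hpm : 0 ≤ p - m := by rw [hpe]; linarith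
      positivity
    · rcases le_total hi m with h2 | h2
      · have hpe : p = hi := by rw [hp, min_eq_left h2, max_eq_right hlohi]
        have hx : x - p ≤ 0 := by rw [hpe]; linarith
        have hpm : p - m ≤ 0 := by rw [hpe]; linarith
        have hprod : 0 ≤ (p - x) * (m - p) :=
          mul_nonneg (by linarith) (by linarith)
        nlinarith [mul_nonneg hA.le hprod]
      · have hpe : p = m := by rw [hp, min_eq_right h2, max_eq_right h1]
        rw [hpe]; simp
  have hkey : A * x ^ 2 + B * x - L * x - (A * p ^ 2 + B * p - L * p)
      = A * (x - p) ^ 2 + (x - p) * (2 * A * (p - m)) := by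
    linear_combination (x - p) * hmval
  nlinarith [mul_nonneg hA.le (sq_nonneg (x - p))]

/-- Theorem 2: if the DC-OPF problem admits a strictly feasible point and
`(λ*, θ*, μ*, P*_G)` is a fixed point of the distributed DC-OPF algorithm,
then the primal variables `(P*_G, θ* − θ*₁·𝟙)` — the fixed-point generator
outputs together with the fixed-point angles shifted so that the slack-bus
angle is zero — form an optimal solution of the DC-OPF problem: they are
feasible, and their total generation cost is less than or equal to that of
every feasible point. -/
theorem fixed_point_is_optimal
    (N : ℕ) (α β γ δ : ℝ) (hα : 0 < α) (hβ : 0 < β) (hγ : 0 < γ) (hδ : 0 < δ)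
    -- network data
    (Ω : Fin (N + 1) → Finset (Fin (N + 1))) (hΩ : ∀ i j, j ∈ Ω i → i ∈ Ω j)
    (X : Fin (N + 1) → Fin (N + 1) → ℝ) (hXsymm : ∀ i j, X i j = X j i)
    (hXpos : ∀ i j, j ∈ Ω i → 0 < X i j)
    (Pbar : Fin (N + 1) → Fin (N + 1) → ℝ)
    (hPbarsymm : ∀ i j, Pbar i j = Pbar j i)
    (hPbarpos : ∀ i j, j ∈ Ω i → 0 < Pbar i j)
    (PL : Fin (N + 1) → ℝ)
    -- generator data (generators at distinct buses are distinct)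
    (G : Fin (N + 1) → Finset ℕ)
    (hGdisj : ∀ i j, i ≠ j → Disjoint (G i) (G j))
    (a b c Plow Pup : ℕ → ℝ)
    (ha : ∀ i, ∀ n ∈ G i, 0 < a n) (hlim : ∀ i, ∀ n ∈ G i, Plow n ≤ Pup n)
    -- strict feasibility of the DC-OPF problem
    (hslater : ∃ PG0 θ0,
        DCOPF.StrictFeasible N Ω X Pbar PL G Plow Pup PG0 θ0)
    -- the fixed point of the distributed algorithm
    (lam θ : Fin (N + 1) → ℝ) (μ : Fin (N + 1) → Fin (N + 1) → ℝ) (PG : ℕ → ℝ)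
    (hfixLam : ∀ i, lam i = lam i
        - β * (lam i * (∑ j ∈ Ω i, 1 / X i j) - (∑ j ∈ Ω i, lam j / X i j)
            + ∑ j ∈ Ω i, (μ i j - μ j i) / X i j)
        - α * ((∑ n ∈ G i, PG n) - PL i - ∑ j ∈ Ω i, (θ i - θ j) / X i j))
    (hfixPG : ∀ i, ∀ n ∈ G i,
        PG n = max (Plow n) (min (Pup n) ((lam i - b n) / (2 * a n))))
    (hfixTheta : ∀ i, θ i = θ i - γ * (-(∑ n ∈ G i, PG n) + PL i
        + ∑ j ∈ Ω i, (θ i - θ j) / X i j))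
    (hfixMu : ∀ i, ∀ j ∈ Ω i,
        μ i j = max 0 (μ i j - δ * (Pbar i j - (θ i - θ j) / X i j))) :
    DCOPF.Feasible N Ω X Pbar PL G Plow Pup PG (fun i => θ i - θ 0) ∧
    ∀ PG' θ', DCOPF.Feasible N Ω X Pbar PL G Plow Pup PG' θ' →
      DCOPF.cost N G a b c PG ≤ DCOPF.cost N G a b c PG' := by

  -- γ, δ fixed-point conditions give primal feasibility + complementarity
  have hbal : ∀ i, (∑ n ∈ G i, PG n) - PL i = ∑ j ∈ Ω i, (θ i - θ j) / X i j := by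
    intro i
    have h := hfixTheta i
    have h2 : γ * (-(∑ n ∈ G i, PG n) + PL i + ∑ j ∈ Ω i, (θ i - θ j) / X i j) = 0 := by
      linarith
    have h3 := (mul_eq_zero.mp h2).resolve_left (ne_of_gt hγ)
    linarith
  have hmu0 : ∀ i, ∀ j ∈ Ω i, 0 ≤ μ i j := by
    intro i j hj
    rw [hfixMu i j hj]; exact le_max_left _ _
  have hflow : ∀ i, ∀ j ∈ Ω i, (θ i - θ j) / X i j ≤ Pbar i j := by
    intro i j hj
    have h := hfixMu i j hj
    have h2 : μ i j - δ * (Pbar i j - (θ i - θ j) / X i j) ≤ μ i j := by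
      nth_rewrite 2 [h]; exact le_max_right _ _
    have h3 : 0 ≤ δ * (Pbar i j - (θ i - θ j) / X i j) := by linarith
    nlinarith
  have hcomp : ∀ i, ∀ j ∈ Ω i, μ i j * (Pbar i j - (θ i - θ j) / X i j) = 0 := by
    intro i j hj
    have h := hfixMu i j hj
    rcases max_choice 0 (μ i j - δ * (Pbar i j - (θ i - θ j) / X i j)) with h2 | h2
    · rw [h2] at h; rw [h, zero_mul]
    · rw [h2] at h
      have h3 : δ * (Pbar i j - (θ i - θ j) / X i j) = 0 := by linarith
      have h4 := (mul_eq_zero.mp h3).resolve_left (ne_of_gt hδ)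
      rw [h4, mul_zero]
  -- λ fixed-point condition gives dual stationarity
  have hstat : ∀ i, ∑ j ∈ Ω i, (lam i - lam j + (μ i j - μ j i)) / X i j = 0 := by
    intro i
    have h := hfixLam i
    have hb := hbal i
    have h2 : β * (lam i * (∑ j ∈ Ω i, 1 / X i j) - (∑ j ∈ Ω i, lam j / X i j)
        + ∑ j ∈ Ω i, (μ i j - μ j i) / X i j) = 0 := by
      rw [hb] at h; rw [sub_self, mul_zero] at h; linarith
    have h3 := (mul_eq_zero.mp h2).resolve_left (ne_of_gt hβ)
    calc ∑ j ∈ Ω i, (lam i - lam j + (μ i j - μ j i)) / X i j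
        = ∑ j ∈ Ω i, (lam i * (1 / X i j) - lam j / X i j + (μ i j - μ j i) / X i j) := by
          apply Finset.sum_congr rfl; intro j _; ring
      _ = lam i * (∑ j ∈ Ω i, 1 / X i j) - (∑ j ∈ Ω i, lam j / X i j)
            + ∑ j ∈ Ω i, (μ i j - μ j i) / X i j := by
          rw [Finset.sum_add_distrib, Finset.sum_sub_distrib, Finset.mul_sum]
      _ = 0 := h3
  -- The key linear identity: for ANY angle vector ψ,
  -- ∑ᵢ ∑ⱼ (λᵢ + μᵢⱼ)·(ψᵢ - ψⱼ)/Xᵢⱼ = 0.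
  have hT : ∀ ψ : Fin (N + 1) → ℝ,
      ∑ i, ∑ j ∈ Ω i, (lam i + μ i j) * ((ψ i - ψ j) / X i j) = 0 := by
    intro ψ
    have hswap : ∑ i, ∑ j ∈ Ω i, (lam i + μ i j) * (ψ j / X i j)
        = ∑ i, ∑ j ∈ Ω i, (lam j + μ j i) * (ψ i / X j i) := by
      exact Finset.sum_comm' (fun x y => by
        simp only [Finset.mem_univ, true_and, and_true]
        exact ⟨hΩ x y, hΩ y x⟩)
    calc ∑ i, ∑ j ∈ Ω i, (lam i + μ i j) * ((ψ i - ψ j) / X i j)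
        = ∑ i, ∑ j ∈ Ω i, ((lam i + μ i j) * (ψ i / X i j)
            - (lam i + μ i j) * (ψ j / X i j)) := by
          apply Finset.sum_congr rfl; intro i _
          apply Finset.sum_congr rfl; intro j _; ring
      _ = (∑ i, ∑ j ∈ Ω i, (lam i + μ i j) * (ψ i / X i j))
            - ∑ i, ∑ j ∈ Ω i, (lam i + μ i j) * (ψ j / X i j) := by
          rw [← Finset.sum_sub_distrib]
          apply Finset.sum_congr rfl; intro i _
          rw [← Finset.sum_sub_distrib]
      _ = ∑ i, ∑ j ∈ Ω i, ((lam i + μ i j) * (ψ i / X i j)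
            - (lam j + μ j i) * (ψ i / X i j)) := by
          rw [hswap, ← Finset.sum_sub_distrib]
          apply Finset.sum_congr rfl; intro i _
          rw [← Finset.sum_sub_distrib]
          apply Finset.sum_congr rfl; intro j _
          rw [hXsymm j i]
      _ = ∑ i, ψ i * ∑ j ∈ Ω i, (lam i - lam j + (μ i j - μ j i)) / X i j := by
          apply Finset.sum_congr rfl; intro i _
          rw [Finset.mul_sum]
          apply Finset.sum_congr rfl; intro j _; ring
      _ = 0 := by
          apply Finset.sum_eq_zero; intro i _
          rw [hstat i, mul_zero]
  -- consequence: λ-weighted net flows equal minus μ-weighted flows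
  have hTsplit : ∀ ψ : Fin (N + 1) → ℝ,
      ∑ i, lam i * (∑ j ∈ Ω i, (ψ i - ψ j) / X i j)
        = - ∑ i, ∑ j ∈ Ω i, μ i j * ((ψ i - ψ j) / X i j) := by
    intro ψ
    have h := hT ψ
    have h2 : ∑ i, ∑ j ∈ Ω i, (lam i + μ i j) * ((ψ i - ψ j) / X i j)
        = (∑ i, lam i * (∑ j ∈ Ω i, (ψ i - ψ j) / X i j))
          + ∑ i, ∑ j ∈ Ω i, μ i j * ((ψ i - ψ j) / X i j) := by
      rw [← Finset.sum_add_distrib]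
      apply Finset.sum_congr rfl; intro i _
      rw [Finset.mul_sum, ← Finset.sum_add_distrib]
      apply Finset.sum_congr rfl; intro j _; ring
    rw [h2] at h; linarith
  -- Feasibility of the fixed point (with shifted angles)
  have hfeas : DCOPF.Feasible N Ω X Pbar PL G Plow Pup PG (fun i => θ i - θ 0) := by
    refine ⟨?_, by simp, ?_, ?_⟩
    · intro i
      have h := hbal i
      rw [h]
      apply Finset.sum_congr rfl; intro j _
      ring_nf
    · intro i n hn
      have h := hfixPG i n hn
      constructor
      · rw [h]; exact le_max_left _ _
      · rw [h]; exact max_le (hlim i n hn) (min_le_left _ _)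
    · intro i j hj
      have hsimp : (θ i - θ 0 - (θ j - θ 0)) / X i j = (θ i - θ j) / X i j := by
        ring_nf
      simp only [hsimp]
      refine ⟨?_, hflow i j hj⟩
      have h2 := hflow j i (hΩ i j hj)
      rw [← hXsymm i j, ← hPbarsymm i j] at h2
      have h3 : (θ j - θ i) / X i j = -((θ i - θ j) / X i j) := by ring
      rw [h3] at h2
      linarith
  refine ⟨hfeas, ?_⟩
  -- Optimality via the Lagrangian / KKT argument
  rintro PG' θ' ⟨hbal', _, hlim', hflow'⟩
  -- Step 1: cost difference dominates λ-weighted generation difference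
  have step1 : ∑ i, lam i * ((∑ n ∈ G i, PG' n) - ∑ n ∈ G i, PG n)
      ≤ DCOPF.cost N G a b c PG' - DCOPF.cost N G a b c PG := by
    have hr0 : DCOPF.cost N G a b c PG' - DCOPF.cost N G a b c PG
        = ∑ i, ((∑ n ∈ G i, (a n * PG' n ^ 2 + b n * PG' n + c n))
            - ∑ n ∈ G i, (a n * PG n ^ 2 + b n * PG n + c n)) := by
      unfold DCOPF.cost
      exact (Finset.sum_sub_distrib _ _).symm
    rw [hr0]
    apply Finset.sum_le_sum
    intro i _
    have hl : lam i * ((∑ n ∈ G i, PG' n) - ∑ n ∈ G i, PG n)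
        = ∑ n ∈ G i, lam i * (PG' n - PG n) := by
      rw [← Finset.sum_sub_distrib, Finset.mul_sum]
    have hr : (∑ n ∈ G i, (a n * PG' n ^ 2 + b n * PG' n + c n))
        - ∑ n ∈ G i, (a n * PG n ^ 2 + b n * PG n + c n)
        = ∑ n ∈ G i, ((a n * PG' n ^ 2 + b n * PG' n + c n)
            - (a n * PG n ^ 2 + b n * PG n + c n)) := (Finset.sum_sub_distrib _ _).symm
    rw [hl, hr]
    apply Finset.sum_le_sum
    intro n hn
    have hq := clamp_quadratic_opt (a n) (b n) (lam i) (Plow n) (Pup n) (PG' n) (PG n)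
      (ha i n hn) (hfixPG i n hn) (hlim' i n hn).1 (hlim' i n hn).2
    linarith
  -- Step 2: rewrite via power balance at both points
  have step2 : ∑ i, lam i * ((∑ n ∈ G i, PG' n) - ∑ n ∈ G i, PG n)
      = (∑ i, lam i * (∑ j ∈ Ω i, (θ' i - θ' j) / X i j))
        - ∑ i, lam i * (∑ j ∈ Ω i, (θ i - θ j) / X i j) := by
    rw [← Finset.sum_sub_distrib]
    apply Finset.sum_congr rfl; intro i _
    have h1 := hbal i
    have h2 := hbal' i
    have : (∑ n ∈ G i, PG' n) - ∑ n ∈ G i, PG n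
        = ((∑ n ∈ G i, PG' n) - PL i) - ((∑ n ∈ G i, PG n) - PL i) := by ring
    rw [this, h1, h2]; ring
  -- Step 3: the resulting quantity is nonnegative by complementarity
  have step3 : 0 ≤ (∑ i, lam i * (∑ j ∈ Ω i, (θ' i - θ' j) / X i j))
      - ∑ i, lam i * (∑ j ∈ Ω i, (θ i - θ j) / X i j) := by
    rw [hTsplit θ', hTsplit θ]
    have hμθ : ∑ i, ∑ j ∈ Ω i, μ i j * ((θ i - θ j) / X i j)
        = ∑ i, ∑ j ∈ Ω i, μ i j * Pbar i j := by
      apply Finset.sum_congr rfl; intro i _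
      apply Finset.sum_congr rfl; intro j hj
      have h := hcomp i j hj
      nlinarith [h]
    have key : 0 ≤ ∑ i, ∑ j ∈ Ω i, (μ i j * Pbar i j - μ i j * ((θ' i - θ' j) / X i j)) := by
      apply Finset.sum_nonneg; intro i _
      apply Finset.sum_nonneg; intro j hj
      have h1 := hmu0 i j hj
      have h2 := (hflow' i j hj).2
      nlinarith
    have key2 : ∀ i ∈ Finset.univ, ∑ j ∈ Ω i, (μ i j * Pbar i j - μ i j * ((θ' i - θ' j) / X i j))
        = (∑ j ∈ Ω i, μ i j * Pbar i j) - ∑ j ∈ Ω i, μ i j * ((θ' i - θ' j) / X i j) :=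
      fun i _ => Finset.sum_sub_distrib _ _
    rw [Finset.sum_congr rfl key2, Finset.sum_sub_distrib] at key
    rw [hμθ]
    linarith
  linarith [step1, step2 ▸ step3]
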